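/- Let K be a field of characteristic 0 and A = ⊕_{i=0}^n A^i a finite-dimensional graded commutative K-algebra which is generated as a K-algebra by A^1, has dim_K A^0 = dim_K A^n = 1 with the unit in A^0, and such that for each 0 ≤ i ≤ n the multiplication pairing A^i × A^{n−i} → A^n is non-degenerate. Let ρ: K^r → A^1 be any surjective K-linear map, fix a K-linear isomorphism φ: A^n → K, and let f ∈ K[x_1,…,x_r] be the unique polynomial with f(a) = φ(ρ(a)^n) for all a ∈ K^r (a homogeneous polynomial of degree n). Then A is isomorphic as a graded K-algebra to K[t_1,…,t_r]/Ann(f), where each t_i has degree 1 and Ann(f) = {p ∈ K[t_1,…,t_r] : p(∂/∂x_1,…,∂/∂x_r) f = 0}. -/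

import Mathlib

open MvPolynomial

/-- The iterated partial derivative `∂^α = ∂₁^{α₁} ⋯ ∂ᵣ^{αᵣ}` applied to a polynomial
(the partial derivatives commute, so the order of application is immaterial). -/
noncomputable def iterPDeriv {K : Type*} [CommSemiring K] {r : ℕ}
    (α : Fin r →₀ ℕ) (f : MvPolynomial (Fin r) K) : MvPolynomial (Fin r) K :=
  (List.finRange r).foldr (fun i g => (fun h => MvPolynomial.pderiv i h)^[α i] g) f

namespace Stmt2Aux

variable {K : Type*} [CommRing K] {r : ℕ}

lemma iter_pderiv_zero (i : Fin r) (m : ℕ) :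
    (fun h => MvPolynomial.pderiv i h)^[m] (0 : MvPolynomial (Fin r) K) = 0 := by
  induction m with
  | zero => rfl
  | succ m ih => rw [Function.iterate_succ_apply', ih]; simp

lemma iter_pderiv_smul_add (i : Fin r) (m : ℕ) (k : K) (a b : MvPolynomial (Fin r) K) :
    (fun h => MvPolynomial.pderiv i h)^[m] (k • a + b)
      = k • (fun h => MvPolynomial.pderiv i h)^[m] a
        + (fun h => MvPolynomial.pderiv i h)^[m] b := by
  induction m with
  | zero => rfl
  | succ m ih => simp only [Function.iterate_succ_apply', ih]; simp

lemma iterPDeriv_smul_add (γ : Fin r →₀ ℕ) (k : K) (a b : MvPolynomial (Fin r) K) :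
    iterPDeriv γ (k • a + b) = k • iterPDeriv γ a + iterPDeriv γ b := by
  unfold iterPDeriv
  induction (List.finRange r) with
  | nil => simp
  | cons i l ih => simp only [List.foldr_cons, ih, iter_pderiv_smul_add]

lemma iterPDeriv_zero' (γ : Fin r →₀ ℕ) :
    iterPDeriv γ (0 : MvPolynomial (Fin r) K) = 0 := by
  unfold iterPDeriv
  induction (List.finRange r) with
  | nil => rfl
  | cons i l ih => simp only [List.foldr_cons, ih, iter_pderiv_zero]

noncomputable def iterPDerivL (γ : Fin r →₀ ℕ) :
    MvPolynomial (Fin r) K →ₗ[K] MvPolynomial (Fin r) K where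
  toFun := iterPDeriv γ
  map_add' a b := by simpa using iterPDeriv_smul_add γ 1 a b
  map_smul' k a := by simpa [iterPDeriv_zero'] using iterPDeriv_smul_add γ k a 0

lemma iterPDeriv_sum {ι : Type*} (s : Finset ι) (g : ι → MvPolynomial (Fin r) K)
    (γ : Fin r →₀ ℕ) :
    iterPDeriv γ (∑ x ∈ s, g x) = ∑ x ∈ s, iterPDeriv γ (g x) :=
  map_sum (iterPDerivL γ) g s

lemma iter_pderiv_monomial (i : Fin r) (m : ℕ) (δ : Fin r →₀ ℕ) (a : K) :
    (fun h => MvPolynomial.pderiv i h)^[m] (monomial δ a)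
      = monomial (δ - Finsupp.single i m) (a * ((δ i).descFactorial m : ℕ)) := by
  induction m with
  | zero => simp
  | succ m ih =>
      rw [Function.iterate_succ_apply', ih]
      show MvPolynomial.pderiv i _ = _
      rw [pderiv_monomial]
      have h1 : (δ - Finsupp.single i m) i = δ i - m := by
        simp [Finsupp.tsub_apply]
      congr 1
      · rw [tsub_tsub, ← Finsupp.single_add]
      · rw [h1, Nat.descFactorial_succ, Nat.cast_mul]; ring

lemma iterPDeriv_monomial (γ δ : Fin r →₀ ℕ) (a : K) :
    iterPDeriv γ (monomial δ a)
      = monomial (δ - γ) (a * ((∏ i, (δ i).descFactorial (γ i) : ℕ) : K)) := by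
  have key : ∀ l : List (Fin r), l.Nodup →
      l.foldr (fun i g => (fun h => MvPolynomial.pderiv i h)^[γ i] g) (monomial δ a)
        = monomial (δ - ∑ j ∈ l.toFinset, Finsupp.single j (γ j))
            (a * ((∏ j ∈ l.toFinset, (δ j).descFactorial (γ j) : ℕ) : K)) := by
    intro l hl
    induction l with
    | nil => simp
    | cons i l ih =>
        have hnd := List.nodup_cons.mp hl
        have hit : i ∉ l.toFinset := by simpa using hnd.1
        rw [List.foldr_cons, ih hnd.2, iter_pderiv_monomial]
        have hS : (δ - ∑ j ∈ l.toFinset, Finsupp.single j (γ j)) i = δ i := by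
          rw [Finsupp.tsub_apply]
          have : (∑ j ∈ l.toFinset, Finsupp.single j (γ j)) i = 0 := by
            rw [Finsupp.finset_sum_apply]
            refine Finset.sum_eq_zero fun j hj => Finsupp.single_eq_of_ne ?_
            rintro rfl; exact hit hj
          rw [this, Nat.sub_zero]
        rw [List.toFinset_cons, Finset.sum_insert hit, Finset.prod_insert hit]
        congr 1
        · rw [tsub_tsub, add_comm]
        · rw [hS, Nat.cast_mul]; ring
  unfold iterPDeriv
  rw [key (List.finRange r) (List.nodup_finRange r), List.toFinset_finRange,
    Finsupp.univ_sum_single]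

end Stmt2Aux

/-- The constant-coefficient differential operator `p(∂/∂x₁, …, ∂/∂xᵣ)` obtained from a
polynomial `p` by substituting `∂/∂xᵢ` for `tᵢ`, applied to the polynomial `f`. -/
noncomputable def diffOpApply {K : Type*} [CommSemiring K] {r : ℕ}
    (p f : MvPolynomial (Fin r) K) : MvPolynomial (Fin r) K :=
  ∑ α ∈ p.support, p.coeff α • iterPDeriv α f

/-- Let `K` be a field of characteristic `0` and `A = ⊕_{i=0}^n Aⁱ` a
finite-dimensional graded commutative `K`-algebra generated by `A¹`, with
`dim A⁰ = dim Aⁿ = 1` and non-degenerate multiplication pairings `Aⁱ × A^{n-i} → Aⁿ`.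
Let `ρ : Kʳ → A¹` be any surjective `K`-linear map, `φ : Aⁿ ≃ K` a linear isomorphism, and
`f` the unique polynomial with `f(a) = φ(ρ(a)ⁿ)` for all `a ∈ Kʳ` (homogeneous of degree
`n`).  Then `A` is isomorphic as a graded `K`-algebra to `K[t₁,…,tᵣ]/Ann(f)`, where each
`tᵢ` has degree `1` and `Ann(f) = {p : p(∂/∂x₁,…,∂/∂xᵣ) f = 0}` (the isomorphism being
witnessed by a surjective graded algebra homomorphism `ψ : K[t₁,…,tᵣ] → A` with kernel
exactly `Ann(f)`). -/
theorem stmt2 {K A : Type*} [Field K] [CharZero K] [CommRing A] [Algebra K A]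
    (𝒜 : ℕ → Submodule K A) [GradedAlgebra 𝒜] [FiniteDimensional K A]
    (n : ℕ)
    (hbound : ∀ i : ℕ, n < i → 𝒜 i = ⊥)
    (hgen : Algebra.adjoin K (𝒜 1 : Set A) = ⊤)
    (h0 : Module.finrank K (𝒜 0) = 1)
    (hn : Module.finrank K (𝒜 n) = 1)
    (hPD : ∀ i ≤ n, ∀ x ∈ 𝒜 i, (∀ y ∈ 𝒜 (n - i), x * y = 0) → x = 0)
    (r : ℕ)
    -- a surjective `K`-linear map `ρ : Kʳ → A¹`:
    (ρ : (Fin r → K) →ₗ[K] A) (hρ : LinearMap.range ρ = 𝒜 1)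
    (φ : (𝒜 n) ≃ₗ[K] K)
    (f : MvPolynomial (Fin r) K)
    (hf : ∀ a : Fin r → K, ∀ h : (ρ a) ^ n ∈ 𝒜 n,
      MvPolynomial.eval a f = φ ⟨(ρ a) ^ n, h⟩) :
    MvPolynomial.IsHomogeneous f n ∧
    ∃ ψ : MvPolynomial (Fin r) K →ₐ[K] A,
      Function.Surjective ψ ∧
      (∀ p : MvPolynomial (Fin r) K, ψ p = 0 ↔ diffOpApply p f = 0) ∧
      (∀ (d : ℕ) (p : MvPolynomial (Fin r) K), MvPolynomial.IsHomogeneous p d → ψ p ∈ 𝒜 d) := by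
  classical
  set v : Fin r → A := fun i => ρ (Pi.single i 1) with hv
  set ψ : MvPolynomial (Fin r) K →ₐ[K] A := MvPolynomial.aeval v with hψdef
  set V : (Fin r →₀ ℕ) → A := fun α => ∏ i, v i ^ α i with hVdef
  set πS : (d : ℕ) → A →ₗ[K] 𝒜 d := fun d =>
    (DirectSum.component K ℕ (fun i => ↥(𝒜 i)) d).comp
      (DirectSum.decomposeLinearEquiv 𝒜).toLinearMap with hπSdef
  set Φ : A →ₗ[K] K := φ.toLinearMap.comp (πS n) with hΦdef
  have hπS_apply : ∀ (d : ℕ) (x : A), ((πS d x : 𝒜 d) : A) = (DirectSum.decompose 𝒜 x d : A) :=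
    fun d x => rfl
  have hΦ_same : ∀ (x : A) (hx : x ∈ 𝒜 n), Φ x = φ ⟨x, hx⟩ := by
    intro x hx
    have h1 : πS n x = ⟨x, hx⟩ :=
      Subtype.ext (by rw [hπS_apply]; exact DirectSum.decompose_of_mem_same 𝒜 hx)
    simp [hΦdef, h1]
  have hΦ_ne : ∀ (m : ℕ) (x : A), x ∈ 𝒜 m → m ≠ n → Φ x = 0 := by
    intro m x hx hmn
    have h1 : πS n x = 0 :=
      Subtype.ext (by rw [hπS_apply]; simpa using DirectSum.decompose_of_mem_ne 𝒜 hx hmn)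
    simp [hΦdef, h1]
  have hv1 : ∀ i, v i ∈ 𝒜 1 := fun i => hρ ▸ LinearMap.mem_range_self ρ _
  have hdeg : ∀ γ : Fin r →₀ ℕ, γ.degree = ∑ i, γ i := by
    intro γ
    exact Finset.sum_subset (Finset.subset_univ _) (fun i _ hi => by
      simpa using Finsupp.notMem_support_iff.mp hi)
  have hVmem : ∀ α : Fin r →₀ ℕ, V α ∈ 𝒜 (∑ i, α i) := by
    intro α
    have h1 := SetLike.prod_pow_mem_graded 𝒜 (i := fun _ : Fin r => 1) (g := v)
      (F := Finset.univ) (fun i => α i) (fun i _ => hv1 i)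
    simpa using h1
  have hψmono : ∀ (α : Fin r →₀ ℕ) (c : K), ψ (monomial α c) = c • V α := by
    intro α c
    show MvPolynomial.aeval v (monomial α c) = c • V α
    rw [aeval_monomial, Finsupp.prod_fintype _ _ (fun i => pow_zero _), ← Algebra.smul_def]
  have hψ_expand : ∀ p : MvPolynomial (Fin r) K, ψ p = ∑ α ∈ p.support, coeff α p • V α := by
    intro p
    conv_lhs => rw [p.as_sum]
    rw [map_sum]
    exact Finset.sum_congr rfl fun α _ => hψmono α _
  have hhomsum : ∀ (d : ℕ) (p : MvPolynomial (Fin r) K), p.IsHomogeneous d → ψ p ∈ 𝒜 d := by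
    intro d p hp
    rw [hψ_expand]
    refine Submodule.sum_mem _ fun α hα => Submodule.smul_mem _ _ ?_
    have h1 : α.degree = d := by
      rw [Finsupp.degree_eq_weight_one]
      exact hp (MvPolynomial.mem_support_iff.mp hα)
    have := hVmem α
    rwa [← hdeg, h1] at this
  have hρv : ∀ a : Fin r → K, ρ a = ∑ i, a i • v i := by
    intro a
    have h1 : a = ∑ i, Pi.single i (a i) := by
      rw [Finset.univ_sum_single]
    conv_lhs => rw [h1]
    rw [map_sum]
    refine Finset.sum_congr rfl fun i _ => ?_
    have : (Pi.single i (a i) : Fin r → K) = a i • (Pi.single i (1 : K) : Fin r → K) := by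
      funext j
      by_cases h : i = j <;> simp [Pi.single_apply, h]
    rw [this, map_smul]
  have hsurj : Function.Surjective ψ := by
    rw [← AlgHom.range_eq_top]
    rw [eq_top_iff, ← hgen]
    refine Algebra.adjoin_le ?_
    intro x hx
    rw [← hρ] at hx
    obtain ⟨a, rfl⟩ := hx
    rw [hρv]
    refine Subalgebra.sum_mem _ fun i _ =>
      Subalgebra.smul_mem _ (show v i ∈ ψ.range from ⟨X i, by simp [hψdef]⟩) _
  have hπψ : ∀ (p : MvPolynomial (Fin r) K) (d : ℕ),
      ((πS d (ψ p) : 𝒜 d) : A) = ψ (homogeneousComponent d p) := by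
    intro p d
    conv_lhs => rw [← MvPolynomial.sum_homogeneousComponent p]
    rw [map_sum, map_sum, Submodule.coe_sum]
    have h1 : ∀ e, ((πS d (ψ (homogeneousComponent e p)) : 𝒜 d) : A)
        = if e = d then ψ (homogeneousComponent e p) else 0 := by
      intro e
      have hmem : ψ (homogeneousComponent e p) ∈ 𝒜 e :=
        hhomsum e _ (homogeneousComponent_isHomogeneous e p)
      rw [hπS_apply]
      by_cases he : e = d
      · subst he; rw [if_pos rfl]; exact DirectSum.decompose_of_mem_same 𝒜 hmem
      · rw [if_neg he]
        simpa using DirectSum.decompose_of_mem_ne 𝒜 hmem he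
    rw [Finset.sum_congr rfl (fun e _ => h1 e), Finset.sum_ite_eq' _ d
      (fun e => ψ (homogeneousComponent e p))]
    by_cases hd : d ∈ Finset.range (p.totalDegree + 1)
    · rw [if_pos hd]
    · rw [if_neg hd, homogeneousComponent_eq_zero, map_zero]
      simpa using Nat.lt_of_succ_le (not_lt.mp (by simpa using hd))
  have hlift : ∀ (e : ℕ) (y : A), y ∈ 𝒜 e →
      ∃ q : MvPolynomial (Fin r) K, q.IsHomogeneous e ∧ ψ q = y := by
    intro e y hy
    obtain ⟨p, rfl⟩ := hsurj y
    refine ⟨homogeneousComponent e p, homogeneousComponent_isHomogeneous e p, ?_⟩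
    rw [← hπψ, hπS_apply]
    exact DirectSum.decompose_of_mem_same 𝒜 hy
  set c : (Fin r → ℕ) → K := fun k => Φ (∏ i, v i ^ k i) with hcdef
  have hρmem : ∀ a : Fin r → K, (ρ a) ^ n ∈ 𝒜 n := by
    intro a
    have h1 : ρ a ∈ 𝒜 1 := hρ ▸ LinearMap.mem_range_self ρ a
    simpa using SetLike.pow_mem_graded n h1
  have hVc : ∀ k : Fin r → ℕ, Φ (V (Finsupp.equivFunOnFinite.symm k)) = c k := by
    intro k
    simp [hVdef, hcdef, Finsupp.coe_equivFunOnFinite_symm]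
  have hfF : f = ∑ k ∈ Finset.piAntidiag Finset.univ n,
      monomial (Finsupp.equivFunOnFinite.symm k)
        ((Nat.multinomial Finset.univ k : K) * c k) := by
    apply MvPolynomial.funext
    intro a
    rw [hf a (hρmem a), map_sum]
    have hρΦ : (φ (⟨(ρ a)^n, hρmem a⟩ : 𝒜 n) : K) = Φ ((ρ a)^n) := (hΦ_same _ _).symm
    rw [hρΦ, hρv, Finset.sum_pow_eq_sum_piAntidiag, map_sum]
    refine Finset.sum_congr rfl fun k hk => ?_
    rw [eval_monomial, Finsupp.prod_fintype _ _ (fun i => pow_zero _)]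
    have h2 : ∏ i, (a i • v i) ^ k i
        = (∏ i, a i ^ k i) • ∏ i, v i ^ k i := by
      simp_rw [smul_pow, Algebra.smul_def, Finset.prod_mul_distrib, map_prod]
    have h3 : ((Nat.multinomial Finset.univ k : A)) * ((∏ i, a i ^ k i) • ∏ i, v i ^ k i)
        = ((Nat.multinomial Finset.univ k : K) * ∏ i, a i ^ k i) • ∏ i, v i ^ k i := by
      rw [Algebra.smul_def, Algebra.smul_def, map_mul, map_natCast, mul_assoc]
    rw [h2, h3, map_smul]
    simp only [Finsupp.coe_equivFunOnFinite_symm, smul_eq_mul, hcdef]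
    ring
  have hfhom : f.IsHomogeneous n := by
    rw [hfF]
    apply MvPolynomial.IsHomogeneous.sum
    intro k hk
    apply isHomogeneous_monomial
    rw [hdeg]
    simp only [Finsupp.coe_equivFunOnFinite_symm]
    exact (Finset.mem_piAntidiag.mp hk).1
  set N : (Fin r →₀ ℕ) → ℕ := fun β => n.factorial / ∏ i, (β i).factorial with hNdef
  have hNmul : ∀ β : Fin r →₀ ℕ, (∑ i, β i) ≤ n →
      N β * ∏ i, (β i).factorial = n.factorial := by
    intro β hβ
    refine Nat.div_mul_cancel ?_
    calc (∏ i, (β i).factorial) ∣ (∑ i, β i).factorial :=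
          ⟨Nat.multinomial Finset.univ β, (Nat.multinomial_spec Finset.univ β).symm⟩
      _ ∣ n.factorial := Nat.factorial_dvd_factorial hβ
  have hNzero : ∀ β : Fin r →₀ ℕ, (∑ i, β i) ≤ n → (N β : K) ≠ 0 := by
    intro β hβ
    have h1 := hNmul β hβ
    have h2 : N β ≠ 0 := by
      intro h
      rw [h, zero_mul] at h1
      exact Nat.factorial_ne_zero n h1.symm
    exact Nat.cast_ne_zero.mpr h2
  have hmuldesc : ∀ β γ : Fin r →₀ ℕ, (∑ i, (β + γ) i) = n →
      Nat.multinomial Finset.univ ⇑(β + γ) * ∏ i, ((β + γ) i).descFactorial (γ i) = N β := by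
    intro β γ hsum
    have hβn : (∑ i, β i) ≤ n := by
      rw [← hsum]
      exact Finset.sum_le_sum fun i _ => by simp
    have key : (Nat.multinomial Finset.univ ⇑(β + γ) * ∏ i, ((β + γ) i).descFactorial (γ i))
        * ∏ i, (β i).factorial = n.factorial := by
      rw [mul_assoc, ← Finset.prod_mul_distrib]
      have h4 : ∀ i, ((β + γ) i).descFactorial (γ i) * (β i).factorial
          = ((β + γ) i).factorial := by
        intro i
        have h1 : γ i ≤ (β + γ) i := by simp
        have h2 := Nat.factorial_mul_descFactorial h1
        rw [show (β + γ) i - γ i = β i by simp] at h2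
        rw [mul_comm]
        exact h2
      simp_rw [h4]
      rw [mul_comm, Nat.multinomial_spec, hsum]
    exact Nat.eq_of_mul_eq_mul_right (Finset.prod_pos fun i _ => Nat.factorial_pos _)
      (key.trans (hNmul β hβn).symm)
  have hcoeff : ∀ (p : MvPolynomial (Fin r) K) (β : Fin r →₀ ℕ),
      coeff β (diffOpApply p f)
        = (N β : K) * ∑ γ ∈ p.support,
            (if (∑ i, (β + γ) i) = n then coeff γ p * Φ (V (β + γ)) else 0) := by
    intro p β
    have hforce : ∀ (γ : Fin r →₀ ℕ) (k : Fin r → ℕ),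
        Finsupp.equivFunOnFinite.symm k - γ = β →
        (∏ i, ((Finsupp.equivFunOnFinite.symm k) i).descFactorial (γ i)) ≠ 0 →
        k = ⇑(β + γ) := by
      intro γ k h1 h2
      funext i
      have hle : γ i ≤ (Finsupp.equivFunOnFinite.symm k) i := by
        by_contra hlt
        push_neg at hlt
        exact h2 (Finset.prod_eq_zero (Finset.mem_univ i)
          (Nat.descFactorial_eq_zero_iff_lt.mpr hlt))
      have h3 : (Finsupp.equivFunOnFinite.symm k) i - γ i = β i := by
        rw [← Finsupp.tsub_apply, h1]
      have h4 : (Finsupp.equivFunOnFinite.symm k) i = k i := by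
        simp [Finsupp.coe_equivFunOnFinite_symm]
      simp only [Finsupp.add_apply]
      omega
    unfold diffOpApply
    rw [hfF, coeff_sum, Finset.mul_sum]
    refine Finset.sum_congr rfl fun γ hγ => ?_
    rw [coeff_smul, Stmt2Aux.iterPDeriv_sum, coeff_sum]
    simp_rw [Stmt2Aux.iterPDeriv_monomial, coeff_monomial]
    have inner : (∑ k ∈ Finset.piAntidiag Finset.univ n,
        if Finsupp.equivFunOnFinite.symm k - γ = β
        then (Nat.multinomial Finset.univ k : K) * c k
            * ((∏ i, ((Finsupp.equivFunOnFinite.symm k) i).descFactorial (γ i) : ℕ) : K)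
        else 0)
        = if (∑ i, (β + γ) i) = n then (N β : K) * Φ (V (β + γ)) else 0 := by
      by_cases hcond : (∑ i, (β + γ) i) = n
      · rw [if_pos hcond]
        have hmem : ⇑(β + γ) ∈ Finset.piAntidiag (Finset.univ : Finset (Fin r)) n := by
          rw [Finset.mem_piAntidiag]
          exact ⟨hcond, fun i _ => Finset.mem_univ i⟩
        rw [Finset.sum_eq_single_of_mem _ hmem]
        · rw [if_pos (show Finsupp.equivFunOnFinite.symm ⇑(β + γ) - γ = β by
            rw [Finsupp.equivFunOnFinite_symm_coe, add_tsub_cancel_right])]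
          rw [show c ⇑(β + γ) = Φ (V (β + γ)) by
            rw [← hVc ⇑(β + γ), Finsupp.equivFunOnFinite_symm_coe]]
          rw [Finsupp.equivFunOnFinite_symm_coe]
          rw [← hmuldesc β γ hcond]
          push_cast
          ring
        · intro k hk hne
          by_cases hif : Finsupp.equivFunOnFinite.symm k - γ = β
          · rw [if_pos hif]
            by_cases hz : (∏ i, ((Finsupp.equivFunOnFinite.symm k) i).descFactorial (γ i)) = 0
            · rw [hz]; simp
            · exact absurd (hforce γ k hif hz) hne
          · rw [if_neg hif]
      · rw [if_neg hcond]
        refine Finset.sum_eq_zero fun k hk => ?_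
        by_cases hif : Finsupp.equivFunOnFinite.symm k - γ = β
        · rw [if_pos hif]
          by_cases hz : (∏ i, ((Finsupp.equivFunOnFinite.symm k) i).descFactorial (γ i)) = 0
          · rw [hz]; simp
          · exfalso
            have hk' := hforce γ k hif hz
            rw [Finset.mem_piAntidiag] at hk
            apply hcond
            rw [← hk.1, hk']
        · rw [if_neg hif]
    rw [inner]
    split_ifs with h
    · rw [smul_eq_mul]; ring
    · simp
  have hΦhc : ∀ (p : MvPolynomial (Fin r) K) (d : ℕ) (β : Fin r →₀ ℕ),
      (∑ i, β i) = n - d → d ≤ n →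
      Φ (ψ (homogeneousComponent d p) * V β)
        = ∑ γ ∈ p.support,
            (if (∑ i, (β + γ) i) = n then coeff γ p * Φ (V (β + γ)) else 0) := by
    intro p d β hβ hdn
    have hhc : ψ (homogeneousComponent d p)
        = ∑ γ ∈ p.support, (if γ.degree = d then coeff γ p else 0) • V γ := by
      rw [homogeneousComponent_apply, Finset.sum_filter, map_sum]
      refine Finset.sum_congr rfl fun γ _ => ?_
      split_ifs with h
      · exact hψmono γ _
      · simp
    rw [hhc, Finset.sum_mul, map_sum]
    refine Finset.sum_congr rfl fun γ hγ => ?_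
    rw [smul_mul_assoc, map_smul]
    have hVV : V γ * V β = V (β + γ) := by
      simp only [hVdef, ← Finset.prod_mul_distrib, ← pow_add, Finsupp.add_apply]
      exact Finset.prod_congr rfl fun i _ => by rw [add_comm (γ i) (β i)]
    rw [hVV]
    have hsum : (∑ i, (β + γ) i) = (∑ i, β i) + ∑ i, γ i := by
      simp [Finsupp.add_apply, Finset.sum_add_distrib]
    rw [hdeg]
    by_cases h1 : (∑ i, γ i) = d
    · rw [if_pos h1, if_pos (show (∑ i, (β + γ) i) = n by rw [hsum, hβ, h1]; omega),
        smul_eq_mul]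
    · rw [if_neg h1, if_neg (show ¬ (∑ i, (β + γ) i) = n by
        intro h2; apply h1; rw [hsum, hβ] at h2; omega), zero_smul]
  have hker : ∀ p : MvPolynomial (Fin r) K, ψ p = 0 ↔ diffOpApply p f = 0 := by
    intro p
    constructor
    · intro hp
      apply MvPolynomial.ext
      intro β
      rw [coeff_zero, hcoeff]
      by_cases hβ : (∑ i, β i) ≤ n
      · rw [← hΦhc p (n - ∑ i, β i) β (by omega) (by omega)]
        have h1 : ψ (homogeneousComponent (n - ∑ i, β i) p) = 0 := by
          rw [← hπψ, hp, map_zero, ZeroMemClass.coe_zero]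
        rw [h1, zero_mul, map_zero, mul_zero]
      · rw [Finset.sum_eq_zero, mul_zero]
        intro γ _
        rw [if_neg]
        intro hcon
        refine hβ (le_of_le_of_eq (Finset.sum_le_sum fun i _ => ?_) hcon)
        rw [Finsupp.add_apply]
        exact Nat.le_add_right _ _
    · intro hd
      have hcomp : ∀ d : ℕ, ψ (homogeneousComponent d p) = 0 := by
        intro d
        by_cases hdn : d ≤ n
        · refine hPD d hdn _ (hhomsum d _ (homogeneousComponent_isHomogeneous d p)) ?_
          intro y hy
          obtain ⟨q, hq, rfl⟩ := hlift (n - d) y hy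
          have hzmem : ψ (homogeneousComponent d p) * ψ q ∈ 𝒜 n := by
            rw [← map_mul]
            have h5 := (homogeneousComponent_isHomogeneous d p).mul hq
            rw [Nat.add_sub_cancel' hdn] at h5
            exact hhomsum n _ h5
          have hΦz : Φ (ψ (homogeneousComponent d p) * ψ q) = 0 := by
            conv_lhs => rw [hψ_expand q]
            rw [Finset.mul_sum, map_sum]
            refine Finset.sum_eq_zero fun β hβ => ?_
            rw [mul_smul_comm, map_smul]
            have hβdeg : (∑ i, β i) = n - d := by
              rw [← hdeg, Finsupp.degree_eq_weight_one]
              exact hq (MvPolynomial.mem_support_iff.mp hβ)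
            have h1 : coeff β (diffOpApply p f) = 0 := by rw [hd, coeff_zero]
            rw [hcoeff, ← hΦhc p d β hβdeg hdn] at h1
            have hβn : (∑ i, β i) ≤ n := by omega
            have h2 := (mul_eq_zero.mp h1).resolve_left (hNzero β hβn)
            rw [h2, smul_zero]
          rw [hΦ_same _ hzmem] at hΦz
          have h3 : (⟨ψ (homogeneousComponent d p) * ψ q, hzmem⟩ : 𝒜 n) = 0 :=
            φ.injective (by rw [hΦz, map_zero])
          exact congrArg Subtype.val h3
        · have h6 := hhomsum d _ (homogeneousComponent_isHomogeneous d p)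
          rw [hbound d (lt_of_not_ge hdn)] at h6
          simpa using h6
      conv_lhs => rw [← MvPolynomial.sum_homogeneousComponent p]
      rw [map_sum]
      exact Finset.sum_eq_zero fun e _ => hcomp e
  exact ⟨hfhom, ψ, hsurj, hker, fun d p h => hhomsum d p h⟩
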